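/- Let s, r, n, m be positive integers, let ℒ = {l₁, l₂, …, l_s} be a set of s nonnegative integers with l₁ < l₂ < … < l_s, and let K = {k₁, k₂, …, k_r} be a set of positive integers with kᵢ > s − r + l₁ for every 1 ≤ i ≤ r. Suppose A₁, A₂, …, A_m are pairwise distinct subsets of [n] such that |Aᵢ| ∈ K for every 1 ≤ i ≤ m and |Aᵢ ∩ Aⱼ| ∈ ℒ for every pair i ≠ j. Let k = max{|Aⱼ| : 1 ≤ j ≤ m}. If n ≥ C(k², l₁+1)·s + l₁, then m ≤ C(n−l₁, s) + C(n−l₁, s−1) + … + C(n−l₁, s−r+1), where terms C(n−l₁, i) with i < 0 are interpreted as 0. -/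

import Mathlib

open Finset

namespace Thm17

variable {n : ℕ}




noncomputable def eT (D T : Finset (Fin n)) : {B : Finset (Fin n) // D ⊆ B} → ℚ :=
  fun B => if T ⊆ B.1 then 1 else 0

lemma eT_mul (D T T' : Finset (Fin n)) : eT D T * eT D T' = eT D (T ∪ T') := by
  funext B
  simp only [eT, Pi.mul_apply, union_subset_iff]
  by_cases h : T ⊆ B.1 <;> by_cases h' : T' ⊆ B.1 <;> simp [h, h']

/-- span of indicator functions of `T ⊆ Dᶜ` with `|T| ≤ d`. -/
noncomputable def Vd (D : Finset (Fin n)) (d : ℕ) : Submodule ℚ ({B : Finset (Fin n) // D ⊆ B} → ℚ) :=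
  Submodule.span ℚ {f | ∃ T : Finset (Fin n), T ⊆ Dᶜ ∧ T.card ≤ d ∧ f = eT D T}

lemma Vd_mono {D : Finset (Fin n)} {d d' : ℕ} (h : d ≤ d') : Vd D d ≤ Vd D d' := by
  apply Submodule.span_mono
  rintro f ⟨T, h1, h2, rfl⟩
  exact ⟨T, h1, h2.trans h, rfl⟩

lemma eT_mem_Vd {D T : Finset (Fin n)} {d : ℕ} (h1 : T ⊆ Dᶜ) (h2 : T.card ≤ d) :
    eT D T ∈ Vd D d :=
  Submodule.subset_span ⟨T, h1, h2, rfl⟩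

lemma mul_mem_Vd {D : Finset (Fin n)} {a b : ℕ} {f g : {B : Finset (Fin n) // D ⊆ B} → ℚ}
    (hf : f ∈ Vd D a) (hg : g ∈ Vd D b) : f * g ∈ Vd D (a + b) := by
  induction hf using Submodule.span_induction with
  | mem x hx =>
    obtain ⟨T, hT, hTc, rfl⟩ := hx
    induction hg using Submodule.span_induction with
    | mem y hy =>
      obtain ⟨T', hT', hT'c, rfl⟩ := hy
      rw [eT_mul]
      exact eT_mem_Vd (union_subset hT hT')
        (le_trans (card_union_le _ _) (add_le_add hTc hT'c))
    | zero => simpa using zero_mem _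
    | add y z hy hz hpy hpz => rw [mul_add]; exact add_mem hpy hpz
    | smul c y hy hpy => rw [mul_smul_comm]; exact Submodule.smul_mem _ _ hpy
  | zero => simpa using zero_mem _
  | add x y hx hy hpx hpy => rw [add_mul]; exact add_mem hpx hpy
  | smul c x hx hpx => rw [smul_mul_assoc]; exact Submodule.smul_mem _ _ hpx

lemma one_mem_Vd {D : Finset (Fin n)} {d : ℕ} : (1 : {B : Finset (Fin n) // D ⊆ B} → ℚ) ∈ Vd D d := by
  have : (1 : {B : Finset (Fin n) // D ⊆ B} → ℚ) = eT D ∅ := by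
    funext B; simp [eT]
  rw [this]
  exact eT_mem_Vd (empty_subset _) (by simp)

lemma prod_mem_Vd {D : Finset (Fin n)} {ι : Type*} (s : Finset ι)
    (f : ι → {B : Finset (Fin n) // D ⊆ B} → ℚ)
    (h : ∀ i ∈ s, f i ∈ Vd D 1) : (∏ i ∈ s, f i) ∈ Vd D s.card := by
  induction s using Finset.cons_induction with
  | empty => simpa using one_mem_Vd
  | cons i s hi ih =>
    rw [prod_cons, card_cons]
    have := mul_mem_Vd (h i (mem_cons_self i s)) (ih fun j hj => h j (mem_cons_of_mem hj))
    rwa [add_comm] at this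

lemma inter_card_eq {D Ai : Finset (Fin n)} (hD : D ⊆ Ai) (B : {B : Finset (Fin n) // D ⊆ B}) :
    (B.1 ∩ Ai).card = (B.1 ∩ (Ai \ D)).card + D.card := by
  have hdisj : Disjoint (B.1 ∩ (Ai \ D)) D := by
    apply Finset.disjoint_left.mpr
    intro a ha haD
    exact (mem_sdiff.mp (mem_inter.mp ha).2).2 haD
  rw [← card_union_of_disjoint hdisj]
  congr 1
  ext a
  simp only [mem_inter, mem_union, mem_sdiff]
  constructor
  · rintro ⟨haB, haAi⟩
    by_cases haD : a ∈ D
    · exact Or.inr haD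
    · exact Or.inl ⟨haB, haAi, haD⟩
  · rintro (⟨haB, haAi, _⟩ | haD)
    · exact ⟨haB, haAi⟩
    · exact ⟨B.2 haD, hD haD⟩

lemma linear_factor_mem {D : Finset (Fin n)} (E : Finset (Fin n)) (hE : Disjoint E D) (c : ℚ) :
    (fun B : {B : Finset (Fin n) // D ⊆ B} => ((B.1 ∩ E).card : ℚ) + c) ∈ Vd D 1 := by
  have heq : (fun B : {B : Finset (Fin n) // D ⊆ B} => ((B.1 ∩ E).card : ℚ) + c)
      = (∑ y ∈ E, eT D {y}) + c • eT D ∅ := by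
    funext B
    have h1 : B.1 ∩ E = E.filter (fun y => y ∈ B.1) := by
      ext a; simp only [mem_inter, mem_filter]; tauto
    simp only [Pi.add_apply, Pi.smul_apply, Finset.sum_apply, eT, smul_eq_mul]
    rw [h1, card_filter]
    push_cast
    simp [singleton_subset_iff]
  rw [heq]
  refine add_mem (Submodule.sum_mem _ fun y hy => ?_) (Submodule.smul_mem _ _ ?_)
  · exact eT_mem_Vd (by simpa using Finset.disjoint_left.mp hE hy) (by simp)
  · exact eT_mem_Vd (empty_subset _) (by simp)



/-- the F polynomial of a set `Ai`. -/
noncomputable def FF (D : Finset (Fin n)) (L : Finset ℕ) (Ai : Finset (Fin n)) :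
    {B : Finset (Fin n) // D ⊆ B} → ℚ :=
  ∏ t ∈ L.filter (· < Ai.card), (fun B => ((B.1 ∩ Ai).card : ℚ) - t)

/-- the G polynomial of a set `I`. -/
noncomputable def GG (D : Finset (Fin n)) (K : Finset ℕ) (I : Finset (Fin n)) :
    {B : Finset (Fin n) // D ⊆ B} → ℚ :=
  eT D I * ∏ x ∈ K, (fun B => (B.1.card : ℚ) - x)

lemma FF_apply (D : Finset (Fin n)) (L : Finset ℕ) (Ai : Finset (Fin n))
    (B : {B : Finset (Fin n) // D ⊆ B}) :
    FF D L Ai B = ∏ t ∈ L.filter (· < Ai.card), (((B.1 ∩ Ai).card : ℚ) - t) := by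
  simp [FF]

lemma GG_apply (D : Finset (Fin n)) (K : Finset ℕ) (I : Finset (Fin n))
    (B : {B : Finset (Fin n) // D ⊆ B}) :
    GG D K I B = (if I ⊆ B.1 then 1 else 0) * ∏ x ∈ K, ((B.1.card : ℚ) - x) := by
  simp [GG, eT]

lemma FF_self_ne_zero (D : Finset (Fin n)) (L : Finset ℕ) {Ai : Finset (Fin n)} (hD : D ⊆ Ai) :
    FF D L Ai ⟨Ai, hD⟩ ≠ 0 := by
  rw [FF_apply]
  apply prod_ne_zero_iff.mpr
  intro t ht
  rw [inter_self]
  have := (mem_filter.mp ht).2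
  have : (t : ℚ) < Ai.card := by exact_mod_cast this
  linarith

lemma FF_other_eq_zero (D : Finset (Fin n)) (L : Finset ℕ) {Ai Aj : Finset (Fin n)}
    (hne : Aj ≠ Ai) (hcard : Ai.card ≤ Aj.card) (hD : D ⊆ Ai)
    (hL : (Ai ∩ Aj).card ∈ L) :
    FF D L Aj ⟨Ai, hD⟩ = 0 := by
  rw [FF_apply]
  set c := (Ai ∩ Aj).card with hc
  have hcle : c ≤ Ai.card := card_le_card inter_subset_left
  have hclt : c < Aj.card := by
    rcases lt_or_eq_of_le (hcle.trans hcard) with h' | h'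
    · exact h'
    · exfalso
      have h1 : Ai ∩ Aj = Aj := eq_of_subset_of_card_le inter_subset_right (by omega)
      have h2 : Aj ⊆ Ai := by rw [← h1]; exact inter_subset_left
      exact hne (eq_of_subset_of_card_le h2 hcard)
  refine prod_eq_zero (mem_filter.mpr ⟨hL, hclt⟩) ?_
  simp [hc]


lemma card_powerset_filter (E : Finset (Fin n)) (p : ℕ → Prop) [DecidablePred p] :
    (E.powerset.filter (fun T => p T.card)).card
      = ∑ j ∈ (range (E.card + 1)).filter p, E.card.choose j := by
  have h : E.powerset.filter (fun T => p T.card)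
      = ((range (E.card + 1)).filter p).biUnion (fun j => E.powersetCard j) := by
    ext T
    simp only [mem_filter, mem_powerset, mem_biUnion, mem_range, mem_powersetCard]
    constructor
    · rintro ⟨h1, h2⟩
      exact ⟨T.card, ⟨Nat.lt_succ_of_le (card_le_card h1), h2⟩, h1, rfl⟩
    · rintro ⟨j, ⟨_, hp⟩, hsub, rfl⟩
      exact ⟨hsub, hp⟩
  rw [h, card_biUnion]
  · exact sum_congr rfl fun j _ => card_powersetCard j E
  · intro i _ j _ hij
    apply disjoint_left.mpr
    intro T hT hT'
    rw [mem_powersetCard] at hT hT'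
    exact hij (hT.2.symm.trans hT'.2)



lemma GG_at_memK {D : Finset (Fin n)} {K : Finset ℕ} (I : Finset (Fin n))
    {C : Finset (Fin n)} (hC : D ⊆ C) (hK : C.card ∈ K) :
    GG D K I ⟨C, hC⟩ = 0 := by
  rw [GG_apply, prod_eq_zero hK (by simp), mul_zero]

lemma lemmaP (L K : Finset ℕ) (D : Finset (Fin n))
    (hKgt : ∀ x ∈ K, (L.card : ℤ) - K.card + D.card < x)
    {ι : Type*} [Fintype ι] (A : ι → Finset (Fin n)) (hA : Function.Injective A)
    (hAK : ∀ i, (A i).card ∈ K) (hAD : ∀ i, D ⊆ A i)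
    (hAL : ∀ i j, i ≠ j → (A i ∩ A j).card ∈ L) :
    Fintype.card ι ≤ ∑ j ∈ Icc (L.card + 1 - K.card) L.card, (n - D.card).choose j := by
  classical
  set s := L.card with hs
  set r := K.card with hr
  set 𝕀 : Finset (Finset (Fin n)) := Dᶜ.powerset.filter (fun I => I.card + r ≤ s) with h𝕀
  set 𝕋 : Finset (Finset (Fin n)) := Dᶜ.powerset.filter (fun T => T.card ≤ s) with h𝕋
  set f : ι ⊕ {I // I ∈ 𝕀} → ({B : Finset (Fin n) // D ⊆ B} → ℚ) :=
    Sum.elim (fun i => FF D L (A i)) (fun I => GG D K I.1) with hf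
  have hindep : LinearIndependent ℚ f := by
    rw [Fintype.linearIndependent_iff]
    intro g hg
    have heval : ∀ B, ∑ z, g z * f z B = 0 := by
      intro B
      have := congrFun hg B
      simpa [Finset.sum_apply] using this
    have hα : ∀ j : ι, g (Sum.inl j) = 0 := by
      by_contra hcon
      push_neg at hcon
      obtain ⟨j0, hj0⟩ := hcon
      obtain ⟨j, hjmem, hjmin⟩ := Finset.exists_min_image
        (Finset.univ.filter (fun j : ι => g (Sum.inl j) ≠ 0)) (fun j => (A j).card)
        ⟨j0, by simp [hj0]⟩
      rw [mem_filter] at hjmem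
      have hev := heval ⟨A j, hAD j⟩
      rw [Fintype.sum_sum_type] at hev
      have h2 : ∑ I : {I // I ∈ 𝕀}, g (Sum.inr I) * f (Sum.inr I) ⟨A j, hAD j⟩ = 0 := by
        apply Finset.sum_eq_zero
        intro I _
        simp only [hf, Sum.elim_inr]
        rw [GG_at_memK I.1 (hAD j) (hAK j), mul_zero]
      rw [h2, add_zero] at hev
      rw [Finset.sum_eq_single j] at hev
      · simp only [hf, Sum.elim_inl] at hev
        rcases mul_eq_zero.mp hev with h | h
        · exact hjmem.2 h
        · exact FF_self_ne_zero D L (hAD j) h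
      · intro b _ hbj
        by_cases hgb : g (Sum.inl b) = 0
        · rw [hgb, zero_mul]
        · have hble : (A j).card ≤ (A b).card := hjmin b (by simp [hgb])
          have hne : A b ≠ A j := fun h => hbj (hA h)
          have hzero : FF D L (A b) ⟨A j, hAD j⟩ = 0 :=
            FF_other_eq_zero D L hne hble (hAD j) (hAL j b (fun h => hbj h.symm))
          simp only [hf, Sum.elim_inl, hzero, mul_zero]
      · intro h
        exact absurd (mem_univ j) h
    have hβ : ∀ I : {I // I ∈ 𝕀}, g (Sum.inr I) = 0 := by
      by_contra hcon
      push_neg at hcon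
      obtain ⟨I0, hI0⟩ := hcon
      obtain ⟨I, hImem, hImin⟩ := Finset.exists_min_image
        (Finset.univ.filter (fun I : {I // I ∈ 𝕀} => g (Sum.inr I) ≠ 0)) (fun I => I.1.card)
        ⟨I0, by simp [hI0]⟩
      rw [mem_filter] at hImem
      have hI𝕀 : (I : Finset (Fin n)) ∈ Dᶜ.powerset.filter (fun I => I.card + r ≤ s) := I.2
      rw [mem_filter, mem_powerset] at hI𝕀
      obtain ⟨hIsub, hIcard⟩ := hI𝕀
      have hIdisj : Disjoint I.1 D := by
        rw [disjoint_left]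
        intro a ha haD
        exact (mem_compl.mp (hIsub ha)) haD
      have hev := heval ⟨I.1 ∪ D, subset_union_right⟩
      rw [Fintype.sum_sum_type] at hev
      have h1 : ∑ i : ι, g (Sum.inl i) * f (Sum.inl i) ⟨I.1 ∪ D, subset_union_right⟩ = 0 := by
        apply Finset.sum_eq_zero
        intro i _
        rw [hα, zero_mul]
      rw [h1, zero_add] at hev
      rw [Finset.sum_eq_single I] at hev
      · have hGne : GG D K I.1 ⟨I.1 ∪ D, subset_union_right⟩ ≠ 0 := by
          rw [GG_apply]
          rw [if_pos subset_union_left, one_mul]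
          apply prod_ne_zero_iff.mpr
          intro x hx
          have hcard : (I.1 ∪ D).card = I.1.card + D.card := card_union_of_disjoint hIdisj
          have hxgt : (I.1.card : ℤ) + D.card < x := by
            have h3 := hKgt x hx
            have h4 : (I.1.card : ℤ) + r ≤ s := by exact_mod_cast hIcard
            omega
          rw [hcard]
          intro hzero
          rw [sub_eq_zero] at hzero
          have h5 : I.1.card + D.card = x := by exact_mod_cast hzero
          omega
        simp only [hf, Sum.elim_inr] at hev
        rcases mul_eq_zero.mp hev with h | h
        · exact hImem.2 h
        · exact hGne h
      · intro J _ hJI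
        by_cases hgJ : g (Sum.inr J) = 0
        · rw [hgJ, zero_mul]
        · have hJle : I.1.card ≤ J.1.card := hImin J (by simp [hgJ])
          have hJ𝕀 : (J : Finset (Fin n)) ∈ Dᶜ.powerset.filter (fun I => I.card + r ≤ s) := J.2
          rw [mem_filter, mem_powerset] at hJ𝕀
          have hnsub : ¬ J.1 ⊆ I.1 ∪ D := by
            intro hsub
            have hJsub : J.1 ⊆ I.1 := by
              intro a ha
              rcases mem_union.mp (hsub ha) with h | h
              · exact h
              · exact absurd h (mem_compl.mp (hJ𝕀.1 ha))
            exact hJI (Subtype.ext (eq_of_subset_of_card_le hJsub hJle))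
          simp only [hf, Sum.elim_inr, GG_apply, if_neg hnsub, zero_mul, mul_zero]
      · intro h
        exact absurd (mem_univ I) h
    rintro (j | I)
    · exact hα j
    · exact hβ I
  have hmem : ∀ z, f z ∈ Vd D s := by
    rintro (i | I)
    · have h1 : FF D L (A i) ∈ Vd D ((L.filter (· < (A i).card)).card) := by
        apply prod_mem_Vd
        intro t _
        have heqf : (fun B : {B : Finset (Fin n) // D ⊆ B} => ((B.1 ∩ A i).card : ℚ) - t)
            = (fun B : {B : Finset (Fin n) // D ⊆ B} =>
                ((B.1 ∩ (A i \ D)).card : ℚ) + ((D.card : ℚ) - t)) := by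
          funext B
          rw [inter_card_eq (hAD i) B]
          push_cast
          ring
        rw [heqf]
        exact linear_factor_mem (A i \ D) sdiff_disjoint _
      exact Vd_mono (card_filter_le _ _) h1
    · obtain ⟨I, hI'⟩ := I
      have hI : I ∈ Dᶜ.powerset.filter (fun I => I.card + r ≤ s) := hI'
      rw [mem_filter, mem_powerset] at hI
      have h1 : eT D I ∈ Vd D I.card := eT_mem_Vd hI.1 le_rfl
      have h2 : (∏ x ∈ K, (fun B : {B : Finset (Fin n) // D ⊆ B} => (B.1.card : ℚ) - x))
          ∈ Vd D r := by
        rw [hr]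
        apply prod_mem_Vd
        intro x _
        have heqf : (fun B : {B : Finset (Fin n) // D ⊆ B} => (B.1.card : ℚ) - x)
            = (fun B : {B : Finset (Fin n) // D ⊆ B} =>
                ((B.1 ∩ Dᶜ).card : ℚ) + ((D.card : ℚ) - x)) := by
          funext B
          have := inter_card_eq (D := D) (Ai := univ) (subset_univ D) B
          rw [inter_univ] at this
          rw [show (univ : Finset (Fin n)) \ D = Dᶜ from (compl_eq_univ_sdiff D).symm] at this
          rw [this]
          push_cast
          ring
        rw [heqf]
        exact linear_factor_mem (D := D) Dᶜ disjoint_compl_left _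
      have h3 := mul_mem_Vd h1 h2
      exact Vd_mono hI.2 h3
  have hcardle : Fintype.card (ι ⊕ {I // I ∈ 𝕀}) ≤ 𝕋.card := by
    set W := Submodule.span ℚ ((𝕋.image (eT D) : Finset _) : Set ({B : Finset (Fin n) // D ⊆ B} → ℚ)) with hW
    have hVW : Vd D s ≤ W := by
      apply Submodule.span_le.mpr
      rintro fz ⟨T, hT1, hT2, rfl⟩
      apply Submodule.subset_span
      simp only [coe_image, Set.mem_image, mem_coe]
      exact ⟨T, mem_filter.mpr ⟨mem_powerset.mpr hT1, hT2⟩, rfl⟩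
    have hmemW : ∀ z, f z ∈ W := fun z => hVW (hmem z)
    have hfin : FiniteDimensional ℚ W := FiniteDimensional.span_of_finite ℚ (Finset.finite_toSet _)
    have hindep' : LinearIndependent ℚ (fun z => (⟨f z, hmemW z⟩ : W)) := by
      apply LinearIndependent.of_comp W.subtype
      convert hindep
      rfl
    have h1 := hindep'.fintype_card_le_finrank
    have h2 : Module.finrank ℚ W ≤ (𝕋.image (eT D)).card :=
      finrank_span_finset_le_card (𝕋.image (eT D))
    exact h1.trans (h2.trans (card_image_le))
  rw [Fintype.card_sum, Fintype.card_coe] at hcardle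
  have hE : (Dᶜ : Finset (Fin n)).card = n - D.card := by
    rw [card_compl, Fintype.card_fin]
  set N := n - D.card with hN
  have hTcard : 𝕋.card = ∑ j ∈ (range (N + 1)).filter (· ≤ s), N.choose j := by
    rw [h𝕋]
    exact (card_powerset_filter Dᶜ (fun j => j ≤ s)).trans (by rw [hE])
  have hIcard : 𝕀.card = ∑ j ∈ (range (N + 1)).filter (fun j => j + r ≤ s), N.choose j := by
    rw [h𝕀]
    exact (card_powerset_filter Dᶜ (fun j => j + r ≤ s)).trans (by rw [hE])
  rw [hTcard, hIcard] at hcardle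
  have hsubset : (range (N+1)).filter (fun j => j + r ≤ s) ⊆ (range (N+1)).filter (· ≤ s) := by
    intro j hj
    rw [mem_filter] at *
    constructor
    · exact hj.1
    · omega
  have hsdiff := Finset.sum_sdiff (f := fun j => N.choose j) hsubset
  beta_reduce at hsdiff
  have hdiffsub : ((range (N+1)).filter (· ≤ s)) \ ((range (N+1)).filter (fun j => j + r ≤ s))
      ⊆ Icc (s+1-r) s := by
    intro j hj
    simp only [mem_sdiff, mem_filter, mem_range, mem_Icc] at *
    omega
  have hfinal : ∑ j ∈ ((range (N+1)).filter (· ≤ s)) \ ((range (N+1)).filter (fun j => j + r ≤ s)),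
      N.choose j ≤ ∑ j ∈ Icc (s+1-r) s, N.choose j :=
    sum_le_sum_of_subset hdiffsub
  omega


variable {n : ℕ}

lemma chain {m : ℕ} (A : Fin m → Finset (Fin n)) (k l₀ : ℕ)
    (hk : ∀ i, (A i).card ≤ k)
    (hsize : ∀ i, l₀ + 1 ≤ (A i).card)
    (hL : ∀ i j, i ≠ j → l₀ ≤ (A i ∩ A j).card)
    (hcap : (univ.inf A).card < l₀) (hm : 0 < m) :
    ∃ S : Finset (Fin m), S.Nonempty ∧ (S.inf A).card < l₀ ∧ (S.sup A).card ≤ k ^ 2 := by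
  classical
  have hl₀pos : 1 ≤ l₀ := by omega
  have hkbig : l₀ + 1 ≤ k := le_trans (hsize ⟨0, hm⟩) (hk ⟨0, hm⟩)
  have aux : ∀ c (S : Finset (Fin m)), S.Nonempty → (S.inf A).card ≤ c →
      (S.sup A).card + (k - l₀) * (S.inf A).card ≤ k + (k - l₀) * k →
      ∃ S' : Finset (Fin m), S'.Nonempty ∧ (S'.inf A).card < l₀ ∧
        (S'.sup A).card + (k - l₀) * (S'.inf A).card ≤ k + (k - l₀) * k := by
    intro c
    induction c using Nat.strong_induction_on with
    | _ c ih =>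
      intro S hS hSc hinv
      by_cases hlt : (S.inf A).card < l₀
      · exact ⟨S, hS, hlt, hinv⟩
      · push_neg at hlt
        have hex : ∃ j, ¬ (S.inf A ⊆ A j) := by
          by_contra hall
          push_neg at hall
          have h1 : S.inf A ⊆ univ.inf A := Finset.le_inf fun j _ => hall j
          have := card_le_card h1
          omega
        obtain ⟨j, hj⟩ := hex
        have hjS : j ∉ S := fun hjS => hj (Finset.inf_le hjS)
        obtain ⟨i0, hi0⟩ := hS
        have hnei : j ≠ i0 := fun h => hjS (h ▸ hi0)
        have hinf' : ((insert j S).inf A) = A j ∩ S.inf A := by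
          rw [inf_insert]; rfl
        have hinfcard : ((insert j S).inf A).card < (S.inf A).card := by
          apply card_lt_card
          rw [hinf']
          constructor
          · exact inter_subset_right
          · intro hsub
            exact hj fun a ha => (mem_inter.mp (hsub ha)).1
        have hsup' : ((insert j S).sup A) = A j ∪ S.sup A := by
          rw [sup_insert]; rfl
        have hsupcard : ((insert j S).sup A).card ≤ (S.sup A).card + (k - l₀) := by
          rw [hsup']
          have h2 : (A j \ S.sup A).card + (S.sup A).card = (A j ∪ S.sup A).card :=
            card_sdiff_add_card _ _
          have h3 : A j \ S.sup A ⊆ A j \ A i0 :=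
            sdiff_subset_sdiff subset_rfl (Finset.le_sup hi0)
          have h4 : (A j \ A i0).card = (A j).card - (A j ∩ A i0).card := by
            rw [← sdiff_inter_self_left]
            rw [card_sdiff_of_subset inter_subset_left]
          have h5 := card_le_card h3
          have h6 := hL j i0 hnei
          have h7 := hk j
          omega
        have harith : ((insert j S).sup A).card + (k - l₀) * ((insert j S).inf A).card
            ≤ k + (k - l₀) * k := by
          have e1 : (k - l₀) * (((insert j S).inf A).card + 1) ≤ (k - l₀) * (S.inf A).card :=
            Nat.mul_le_mul_left _ (by omega)
          have e2 : (k - l₀) * (((insert j S).inf A).card + 1)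
              = (k - l₀) * ((insert j S).inf A).card + (k - l₀) := by ring
          omega
        exact ih ((insert j S).inf A).card (by omega) (insert j S)
          (insert_nonempty _ _) le_rfl harith
  have hstart : ({⟨0, hm⟩} : Finset (Fin m)).Nonempty := singleton_nonempty _
  have hinfs : (({⟨0, hm⟩} : Finset (Fin m)).inf A) = A ⟨0, hm⟩ := by simp
  have hsups : (({⟨0, hm⟩} : Finset (Fin m)).sup A) = A ⟨0, hm⟩ := by simp
  have hinv0 : (({⟨0, hm⟩} : Finset (Fin m)).sup A).card
      + (k - l₀) * (({⟨0, hm⟩} : Finset (Fin m)).inf A).card ≤ k + (k - l₀) * k := by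
    rw [hinfs, hsups]
    have e1 : (k - l₀) * (A ⟨0, hm⟩).card ≤ (k - l₀) * k := Nat.mul_le_mul_left _ (hk _)
    have := hk (⟨0, hm⟩ : Fin m)
    omega
  obtain ⟨S, hS1, hS2, hS3⟩ := aux _ _ hstart le_rfl hinv0
  refine ⟨S, hS1, hS2, ?_⟩
  have e1 : (k - l₀) * k ≤ (k - 1) * k := Nat.mul_le_mul_right _ (by omega)
  have e2 : k + (k - 1) * k = k ^ 2 := by
    obtain ⟨k', rfl⟩ : ∃ k', k = k' + 1 := ⟨k - 1, by omega⟩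
    simp [Nat.add_sub_cancel]
    ring
  omega


lemma sum_shift (a b : ℕ) (f : ℕ → ℕ) :
    ∑ j ∈ Icc a b, f (j + 1) = ∑ j ∈ Icc (a + 1) (b + 1), f j := by
  rw [← Finset.map_add_right_Icc a b 1, sum_map]
  rfl

theorem main (s r n m : ℕ) (hs : 0 < s) (hr : 0 < r) (hn : 0 < n) (hm : 0 < m)
    (l : Fin s → ℕ) (hl : StrictMono l)
    (K : Finset ℕ) (hKcard : K.card = r) (hKpos : ∀ x ∈ K, 0 < x)
    (hKgt : ∀ x ∈ K, (x : ℤ) > (s : ℤ) - (r : ℤ) + (l ⟨0, hs⟩ : ℤ))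
    (A : Fin m → Finset (Fin n)) (hA : Function.Injective A)
    (hAK : ∀ i, (A i).card ∈ K)
    (hAL : ∀ i j, i ≠ j → ∃ t, (A i ∩ A j).card = l t)
    (k : ℕ) (hk₁ : ∀ j, (A j).card ≤ k) (hk₂ : ∃ j, (A j).card = k)
    (hbig : n ≥ (k ^ 2).choose (l ⟨0, hs⟩ + 1) * s + l ⟨0, hs⟩) :
    m ≤ ∑ j ∈ Finset.Icc (s + 1 - r) s, (n - l ⟨0, hs⟩).choose j := by
  classical
  set l₀ := l ⟨0, hs⟩ with hl₀
  clear_value l₀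
  set L : Finset ℕ := Finset.image l univ with hLdef
  have hLcard : L.card = s := by
    rw [hLdef, card_image_of_injective _ hl.injective, card_univ, Fintype.card_fin]
  have hl₀L : l₀ ∈ L := by
    rw [hLdef, mem_image]; exact ⟨⟨0, hs⟩, mem_univ _, hl₀.symm⟩
  have hmin : ∀ x ∈ L, l₀ ≤ x := by
    intro x hx
    rw [hLdef, mem_image] at hx
    obtain ⟨t, _, rfl⟩ := hx
    rw [hl₀]
    exact hl.monotone (by simp [Fin.le_def])
  have hALmem : ∀ i j, i ≠ j → (A i ∩ A j).card ∈ L := by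
    intro i j hij
    obtain ⟨t, ht⟩ := hAL i j hij
    rw [hLdef, mem_image]
    exact ⟨t, mem_univ t, ht.symm⟩
  by_cases hcore : l₀ ≤ (univ.inf A).card
  · -- Case 1: common core of size l₀
    obtain ⟨D, hDsub, hDcard⟩ := exists_subset_card_eq hcore
    have hbound := lemmaP L K D
      (by intro x hx; rw [hLcard, hKcard, hDcard]; exact_mod_cast hKgt x hx)
      A hA hAK (fun i => hDsub.trans (Finset.inf_le (mem_univ i))) hALmem
    rw [Fintype.card_fin, hLcard, hKcard, hDcard] at hbound
    exact hbound
  · push_neg at hcore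
    have hl₀pos : 1 ≤ l₀ := by omega
    by_cases hm1 : m = 1
    · -- trivial case m = 1
      subst hm1
      have hinf : (univ : Finset (Fin 1)).inf A = A 0 := by
        rw [show (univ : Finset (Fin 1)) = {0} from rfl, inf_singleton]
      rw [hinf] at hcore
      have h1 := hKgt _ (hAK 0)
      have hr' : s < r := by omega
      have hs1 : s + 1 - r = 0 := by omega
      rw [hs1]
      have h0mem : 0 ∈ Icc 0 s := by simp
      calc (1:ℕ) = (n - l₀).choose 0 := by simp
      _ ≤ ∑ j ∈ Icc 0 s, (n - l₀).choose j :=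
          single_le_sum (fun i _ => Nat.zero_le _) h0mem
    · have hm2 : 2 ≤ m := by omega
      have hsize : ∀ i, l₀ + 1 ≤ (A i).card := by
        intro i
        obtain ⟨j, hij⟩ : ∃ j : Fin m, j ≠ i := by
          have h1 : 1 < Fintype.card (Fin m) := by rw [Fintype.card_fin]; omega
          exact Fintype.exists_ne_of_one_lt_card h1 i
        have h1 : l₀ ≤ (A i ∩ A j).card := hmin _ (hALmem i j hij.symm)
        have h2 : (A i ∩ A j).card ≤ (A i).card := card_le_card inter_subset_left
        by_contra hcon
        push_neg at hcon
        have hAcard : (A i).card = l₀ := by omega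
        have hsub : ∀ j', A i ⊆ A j' := by
          intro j'
          by_cases hj' : j' = i
          · subst hj'; exact subset_rfl
          · have e1 : l₀ ≤ (A i ∩ A j').card := hmin _ (hALmem i j' (fun h => hj' h.symm))
            have e2 : (A i ∩ A j').card ≤ (A i).card := card_le_card inter_subset_left
            have e3 : A i ∩ A j' = A i :=
              eq_of_subset_of_card_le inter_subset_left (by omega)
            rw [← e3]; exact inter_subset_right
        have h4 : A i ⊆ univ.inf A := Finset.le_inf fun j' _ => hsub j'
        have := card_le_card h4
        omega
      have hloL : ∀ i j, i ≠ j → l₀ ≤ (A i ∩ A j).card :=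
        fun i j hij => hmin _ (hALmem i j hij)
      obtain ⟨S, hSne, hSinf, hSsup⟩ := chain A k l₀ hk₁ hsize hloL hcore hm
      set U := S.sup A with hU
      have hAU : ∀ i, l₀ + 1 ≤ ((A i) ∩ U).card := by
        intro i
        by_cases hiS : i ∈ S
        · have h1 : A i ⊆ U := Finset.le_sup hiS
          rw [inter_eq_left.mpr h1]
          exact hsize i
        · by_contra hcon
          push_neg at hcon
          obtain ⟨j0, hj0⟩ := hSne
          have hij0 : i ≠ j0 := fun h => hiS (h ▸ hj0)
          have hallsub : ∀ j ∈ S, A i ∩ U ⊆ A j := by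
            intro j hjS
            have hij : i ≠ j := fun h => hiS (h ▸ hjS)
            have e1 : l₀ ≤ (A i ∩ A j).card := hloL i j hij
            have e2 : A i ∩ A j ⊆ A i ∩ U :=
              inter_subset_inter subset_rfl (Finset.le_sup hjS)
            have e2' := card_le_card e2
            have e3 : A i ∩ A j = A i ∩ U :=
              eq_of_subset_of_card_le e2 (by omega)
            rw [← e3]; exact inter_subset_right
          have hsubinf : A i ∩ U ⊆ S.inf A := Finset.le_inf hallsub
          have e4 : l₀ ≤ (A i ∩ U).card :=
            le_trans (hloL i j0 hij0)
              (card_le_card (inter_subset_inter subset_rfl (Finset.le_sup hj0)))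
          have := card_le_card hsubinf
          omega
      have hchoice : ∀ i, ∃ T, T ⊆ A i ∩ U ∧ T.card = l₀ + 1 :=
        fun i => exists_subset_card_eq (hAU i)
      choose φ hφ1 hφ2 using hchoice
      set Pset := U.powersetCard (l₀ + 1) with hPset
      have hφmem : ∀ i : Fin m, φ i ∈ Pset := by
        intro i
        rw [hPset, mem_powersetCard]
        exact ⟨(hφ1 i).trans inter_subset_right, hφ2 i⟩
      have hfib : m = ∑ T ∈ Pset, (univ.filter (fun i => φ i = T)).card := by
        have h1 := card_eq_sum_card_fiberwise (fun i (_ : i ∈ univ) => hφmem i)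
        simpa using h1
      set L' := L.erase l₀ with hL'
      have hL'card : L'.card = s - 1 := by
        rw [hL', card_erase_of_mem hl₀L, hLcard]
      have hfibbound : ∀ T ∈ Pset, (univ.filter (fun i => φ i = T)).card
          ≤ ∑ j ∈ Icc (s - r) (s - 1), (n - (l₀ + 1)).choose j := by
        intro T hT
        rw [hPset, mem_powersetCard] at hT
        have hTA : ∀ i : {i : Fin m // φ i = T}, T ⊆ A i.1 := by
          intro i
          have h := (hφ1 i.1).trans inter_subset_left
          rw [i.2] at h
          exact h
        have hbound := lemmaP L' K T
          (by
            intro x hx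
            have h1 := hKgt x hx
            rw [hL'card, hKcard, hT.2]
            omega)
          (fun i : {i : Fin m // φ i = T} => A i.1)
          (fun a b h => Subtype.ext (hA h))
          (fun i => hAK i.1) hTA
          (by
            intro i j hij
            show (A i.1 ∩ A j.1).card ∈ L'
            have hij' : i.1 ≠ j.1 := fun h => hij (Subtype.ext h)
            have h1 : (A i.1 ∩ A j.1).card ∈ L := hALmem i.1 j.1 hij'
            have h2 : T ⊆ A i.1 ∩ A j.1 := subset_inter (hTA i) (hTA j)
            have h3 := card_le_card h2
            rw [hT.2] at h3
            exact mem_erase.mpr ⟨by omega, h1⟩)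
        rw [Fintype.card_subtype] at hbound
        rw [hL'card, hKcard, hT.2] at hbound
        have hidx : s - 1 + 1 - r = s - r := by omega
        rw [hidx] at hbound
        exact hbound
      have hsum : m ≤ Pset.card * ∑ j ∈ Icc (s - r) (s - 1), (n - (l₀ + 1)).choose j := by
        rw [hfib]
        calc ∑ T ∈ Pset, (univ.filter (fun i => φ i = T)).card
            ≤ ∑ _T ∈ Pset, (∑ j ∈ Icc (s - r) (s - 1), (n - (l₀ + 1)).choose j) :=
              sum_le_sum hfibbound
        _ = Pset.card * ∑ j ∈ Icc (s - r) (s - 1), (n - (l₀ + 1)).choose j := by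
              rw [sum_const, smul_eq_mul]
      have hPsetcard : Pset.card ≤ (k ^ 2).choose (l₀ + 1) := by
        rw [hPset, card_powersetCard]
        exact Nat.choose_le_choose _ hSsup
      set c := (k ^ 2).choose (l₀ + 1) with hc
      clear_value c
      have hcpos : 1 ≤ c := by
        rw [hc]
        apply Nat.choose_pos
        have h1 : l₀ + 1 ≤ k := le_trans (hsize ⟨0, hm⟩) (hk₁ ⟨0, hm⟩)
        have h2 : k ≤ k ^ 2 := by nlinarith
        omega
      have hnl : l₀ + 1 ≤ n := by
        have : s ≤ c * s := Nat.le_mul_of_pos_left s hcpos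
        omega
      set N := n - l₀ - 1 with hNdef
      clear_value N
      have hNn : n - (l₀ + 1) = N := by omega
      have hNs : N + 1 = n - l₀ := by omega
      have hcs : c * s ≤ N + 1 := by omega
      have hterm : ∀ j ∈ Icc (s - r) (s - 1), c * N.choose j ≤ (N + 1).choose (j + 1) := by
        intro j hj
        rw [mem_Icc] at hj
        have hj1 : j + 1 ≤ s := by omega
        have key : c * N.choose j * (j + 1) ≤ (N + 1).choose (j + 1) * (j + 1) := by
          calc c * N.choose j * (j + 1) = (c * (j + 1)) * N.choose j := by ring
          _ ≤ (N + 1) * N.choose j :=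
              Nat.mul_le_mul_right _ (le_trans (Nat.mul_le_mul_left c hj1) hcs)
          _ = (N + 1).choose (j + 1) * (j + 1) := Nat.add_one_mul_choose_eq N j
        exact Nat.le_of_mul_le_mul_right key (by omega)
      have hstep : c * ∑ j ∈ Icc (s - r) (s - 1), N.choose j
          ≤ ∑ j ∈ Icc (s - r) (s - 1), (N + 1).choose (j + 1) := by
        rw [mul_sum]
        exact sum_le_sum hterm
      have hshift : ∑ j ∈ Icc (s - r) (s - 1), (N + 1).choose (j + 1)
          = ∑ j ∈ Icc (s - r + 1) s, (N + 1).choose j := by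
        rw [sum_shift]
        rw [show s - 1 + 1 = s by omega]
      have hsubset2 : Icc (s - r + 1) s ⊆ Icc (s + 1 - r) s := by
        intro j hj
        rw [mem_Icc] at *
        omega
      calc m ≤ Pset.card * ∑ j ∈ Icc (s - r) (s - 1), (n - (l₀ + 1)).choose j := hsum
      _ ≤ c * ∑ j ∈ Icc (s - r) (s - 1), (n - (l₀ + 1)).choose j :=
          Nat.mul_le_mul_right _ hPsetcard
      _ = c * ∑ j ∈ Icc (s - r) (s - 1), N.choose j := by rw [hNn]
      _ ≤ ∑ j ∈ Icc (s - r) (s - 1), (N + 1).choose (j + 1) := hstep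
      _ = ∑ j ∈ Icc (s - r + 1) s, (N + 1).choose j := hshift
      _ ≤ ∑ j ∈ Icc (s + 1 - r) s, (N + 1).choose j :=
          sum_le_sum_of_subset hsubset2
      _ = ∑ j ∈ Icc (s + 1 - r) s, (n - l₀).choose j := by rw [hNs]

end Thm17

/-- **Theorem 1.7.** Let `ℒ = {l 0 < l 1 < ⋯ < l (s-1)}` be a set of `s` nonnegative
integers and `K` a set of `r` positive integers each greater than `s - r + l₁`.
If `A 1, …, A m` are pairwise distinct subsets of `[n]` with sizes in `K`,
pairwise intersections with cardinality in `ℒ`, maximum size `k`, and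
`n ≥ C(k², l₁+1)·s + l₁`, then
`m ≤ C(n-l₁, s) + C(n-l₁, s-1) + ⋯ + C(n-l₁, s-r+1)`
(terms with negative lower index being `0`). -/
theorem stmt_0 (s r n m : ℕ) (hs : 0 < s) (hr : 0 < r) (hn : 0 < n) (hm : 0 < m)
    (l : Fin s → ℕ) (hl : StrictMono l)
    (K : Finset ℕ) (hKcard : K.card = r) (hKpos : ∀ x ∈ K, 0 < x)
    (hKgt : ∀ x ∈ K, (x : ℤ) > (s : ℤ) - (r : ℤ) + (l ⟨0, hs⟩ : ℤ))
    (A : Fin m → Finset (Fin n)) (hA : Function.Injective A)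
    (hAK : ∀ i, (A i).card ∈ K)
    (hAL : ∀ i j, i ≠ j → ∃ t, (A i ∩ A j).card = l t)
    (k : ℕ) (hk₁ : ∀ j, (A j).card ≤ k) (hk₂ : ∃ j, (A j).card = k)
    (hbig : n ≥ (k ^ 2).choose (l ⟨0, hs⟩ + 1) * s + l ⟨0, hs⟩) :
    m ≤ ∑ j ∈ Finset.Icc (s + 1 - r) s, (n - l ⟨0, hs⟩).choose j := by
  exact Thm17.main s r n m hs hr hn hm l hl K hKcard hKpos hKgt A hA hAK hAL k hk₁ hk₂ hbig
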